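/- Given f : ℝ → ℝ with f(r) ≠ 0 for every rational r ∈ [0,1], the function g_f is graph continuous: the graph ℝ × {0} of the zero function is contained in the closure of the graph of g_f. -/
import Mathlib


/-- Graph continuity. -/
def GraphContinuous (f : ℝ → ℝ) : Prop :=
  ∃ g : ℝ → ℝ, Continuous g ∧
    {p : ℝ × ℝ | p.2 = g p.1} ⊆ closure {p : ℝ × ℝ | p.2 = f p.1}

open Classical in
/-- The function `g_f`: equals `1` at `x` if some rational shift of `x` lands in
`[0,1]` on a zero of `f`, and `0` otherwise. -/
noncomputable def gf (f : ℝ → ℝ) (x : ℝ) : ℝ :=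
  if ∃ q : ℚ, x + (q : ℝ) ∈ Set.Icc (0:ℝ) 1 ∧ f (x + (q : ℝ)) = 0 then 1 else 0

lemma gf_rat_eq_zero (f : ℝ → ℝ)
    (hf : ∀ r : ℚ, (r : ℝ) ∈ Set.Icc (0:ℝ) 1 → f r ≠ 0) (q : ℚ) :
    gf f (q : ℝ) = 0 := by
  unfold gf
  rw [if_neg]
  rintro ⟨q', hmem, hzero⟩
  have h : ((q : ℝ) + (q' : ℝ)) = ((q + q' : ℚ) : ℝ) := by push_cast; ring
  rw [h] at hmem hzero
  exact hf (q + q') hmem hzero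

lemma zero_graph_subset (f : ℝ → ℝ)
    (hf : ∀ r : ℚ, (r : ℝ) ∈ Set.Icc (0:ℝ) 1 → f r ≠ 0) :
    {p : ℝ × ℝ | p.2 = 0} ⊆ closure {p : ℝ × ℝ | p.2 = gf f p.1} := by
  rintro ⟨x, y⟩ hy
  simp only [Set.mem_setOf_eq] at hy
  subst hy
  have hx : x ∈ closure (Set.range ((↑) : ℚ → ℝ)) := by
    rw [Rat.denseRange_cast.closure_range]; trivial
  obtain ⟨u, hu, hlim⟩ := mem_closure_iff_seq_limit.mp hx
  apply mem_closure_of_tendsto (f := fun n => (u n, gf f (u n))) (b := Filter.atTop)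
  · exact Filter.Tendsto.prodMk_nhds hlim (by
      have : ∀ n, gf f (u n) = 0 := fun n => by
        obtain ⟨q, hq⟩ := hu n
        rw [← hq]; exact gf_rat_eq_zero f hf q
      simp only [this]; exact tendsto_const_nhds)
  · exact Filter.Eventually.of_forall fun n => rfl

theorem gf_graphContinuous (f : ℝ → ℝ)
    (hf : ∀ r : ℚ, (r : ℝ) ∈ Set.Icc (0:ℝ) 1 → f r ≠ 0) :
    ({p : ℝ × ℝ | p.2 = 0} ⊆ closure {p : ℝ × ℝ | p.2 = gf f p.1}) ∧
      GraphContinuous (gf f) := by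
  refine ⟨zero_graph_subset f hf, 0, continuous_const, ?_⟩
  simpa using zero_graph_subset f hf
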